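/- arXiv:1902.08530 — 3 statements merged into one kernel-verified Lean document; each statement's English description precedes it below -/
import Mathlib

section
/- Let (X, μ) be a measure space, 0 < p < ∞, and let (f_j) be a sequence in L^p(X, μ) with sup_j ‖f_j‖_p < ∞ that converges pointwise a.e. to a function f. Then lim_{j→∞} ∫_X | |f_j|^p − |f_j − f|^p − |f|^p | dμ = 0. -/
open MeasureTheory Filter
open scoped ENNReal

lemma bl_add_rpow_le {p : ℝ} (hp0 : 0 ≤ p) (hp1 : p ≤ 1) {x y : ℝ} (hx : 0 ≤ x) (hy : 0 ≤ y) :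
    (x + y) ^ p ≤ x ^ p + y ^ p := by
  have h := NNReal.rpow_add_le_add_rpow (Real.toNNReal x) (Real.toNNReal y) hp0 hp1
  have h2 := NNReal.coe_le_coe.mpr h
  push_cast [NNReal.coe_rpow, Real.coe_toNNReal x hx, Real.coe_toNNReal y hy] at h2
  exact h2

lemma bl_mvt {p : ℝ} (hp : 1 ≤ p) {x y : ℝ} (hy : 0 ≤ y) (hxy : y ≤ x) :
    x ^ p - y ^ p ≤ p * x ^ (p - 1) * (x - y) := by
  have hx : 0 ≤ x := hy.trans hxy
  have hderiv : ∀ t ∈ Set.Icc y x, HasDerivWithinAt (fun s : ℝ => s ^ p)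
      (p * t ^ (p - 1)) (Set.Icc y x) t := fun t _ => by
    simpa [mul_comm] using (Real.hasDerivAt_rpow_const (p := p) (x := t) (Or.inr hp)).hasDerivWithinAt
  have hbound : ∀ t ∈ Set.Ico y x, ‖p * t ^ (p - 1)‖ ≤ p * x ^ (p - 1) := by
    intro t ht
    have ht0 : 0 ≤ t := hy.trans ht.1
    have hp1 : (0:ℝ) ≤ p - 1 := by linarith
    rw [Real.norm_eq_abs, abs_of_nonneg (by positivity)]
    exact mul_le_mul_of_nonneg_left (Real.rpow_le_rpow ht0 ht.2.le hp1) (by linarith)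
  have := norm_image_sub_le_of_norm_deriv_le_segment' hderiv hbound x ⟨hxy, le_refl x⟩
  calc x ^ p - y ^ p ≤ ‖x ^ p - y ^ p‖ := le_abs_self _
    _ ≤ p * x ^ (p - 1) * (x - y) := this

lemma bl_young {p : ℝ} (hp : 1 < p) {t : ℝ} (ht : 0 < t) {u v : ℝ} (hu : 0 ≤ u) (hv : 0 ≤ v) :
    u ^ (p - 1) * v ≤ (p - 1) / p * t * u ^ p + 1 / p * t ^ (1 - p) * v ^ p := by
  have hp0 : (0:ℝ) < p := by linarith
  have hθ : 0 ≤ (p - 1) / p := div_nonneg (by linarith) hp0.le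
  have hw : (p - 1) / p + 1 / p = 1 := by field_simp; ring
  have h := Real.geom_mean_le_arith_mean2_weighted (p₂ := t ^ (1 - p) * v ^ p) hθ (by positivity)
    (mul_nonneg ht.le (Real.rpow_nonneg hu p))
    (mul_nonneg (Real.rpow_nonneg ht.le (1 - p)) (Real.rpow_nonneg hv p)) hw
  have e1 : p * ((p - 1) / p) = p - 1 := by field_simp
  have e2 : (1 - p) * (1 / p) = (1 - p) / p := by ring
  have e3 : p * (1 / p) = 1 := by field_simp
  have htt : t ^ ((p - 1) / p) * t ^ ((1 - p) / p) = 1 := by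
    rw [← Real.rpow_add ht]
    have : (p - 1) / p + (1 - p) / p = 0 := by ring
    rw [this, Real.rpow_zero]
  calc u ^ (p - 1) * v
      = (t * u ^ p) ^ ((p - 1) / p) * (t ^ (1 - p) * v ^ p) ^ (1 / p) := by
        rw [Real.mul_rpow ht.le (Real.rpow_nonneg hu p),
          Real.mul_rpow (Real.rpow_nonneg ht.le _) (Real.rpow_nonneg hv p),
          ← Real.rpow_mul hu, ← Real.rpow_mul ht.le, ← Real.rpow_mul hv, e1, e2, e3,
          Real.rpow_one]
        calc u ^ (p - 1) * v
            = (t ^ ((p - 1) / p) * t ^ ((1 - p) / p)) * (u ^ (p - 1) * v) := by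
              rw [htt, one_mul]
          _ = t ^ ((p - 1) / p) * u ^ (p - 1) * (t ^ ((1 - p) / p) * v) := by ring
    _ ≤ (p - 1) / p * (t * u ^ p) + 1 / p * (t ^ (1 - p) * v ^ p) := h
    _ = (p - 1) / p * t * u ^ p + 1 / p * t ^ (1 - p) * v ^ p := by ring

lemma bl_key {p : ℝ} (hp : 0 < p) {ε : ℝ} (hε : 0 < ε) :
    ∃ C : ℝ, 0 ≤ C ∧ ∀ a b : ℝ, |(|a + b| ^ p - |a| ^ p)| ≤ ε * |a| ^ p + C * |b| ^ p := by
  rcases le_or_gt p 1 with hp1 | hp1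
  · refine ⟨1, zero_le_one, fun a b => ?_⟩
    have h1 : |a + b| ^ p ≤ |a| ^ p + |b| ^ p :=
      (Real.rpow_le_rpow (abs_nonneg _) (abs_add_le a b) hp.le).trans
        (bl_add_rpow_le hp.le hp1 (abs_nonneg a) (abs_nonneg b))
    have h2 : |a| ^ p ≤ |a + b| ^ p + |b| ^ p := by
      have hle : |a| ≤ |a + b| + |b| := by
        have := abs_add_le (a + b) (-b)
        simpa using this
      exact (Real.rpow_le_rpow (abs_nonneg _) hle hp.le).trans
        (bl_add_rpow_le hp.le hp1 (abs_nonneg _) (abs_nonneg b))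
    have hε' : 0 ≤ ε * |a| ^ p := by positivity
    rw [one_mul, abs_le]
    constructor <;> linarith
  · have hp0 : (0:ℝ) < p := hp
    set θ := (p - 1) / p with hθdef
    have hθpos : 0 < θ := div_pos (by linarith) hp0
    have h2pos : (0:ℝ) < (2:ℝ) ^ (p - 1) := Real.rpow_pos_of_pos two_pos _
    set t := ε / (p * 2 ^ (p - 1) * θ) with htdef
    have ht : 0 < t := by
      apply div_pos hε
      positivity
    have htp : (0:ℝ) ≤ t ^ (1 - p) := Real.rpow_nonneg ht.le _
    refine ⟨2 ^ (p - 1) * t ^ (1 - p) + p * 2 ^ (p - 1), by positivity, fun a b => ?_⟩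
    have hsub1 : |a + b| - |a| ≤ |b| := by
      have := abs_sub_abs_le_abs_sub (a + b) a
      simpa using this
    have hsub2 : |a| - |a + b| ≤ |b| := by
      have := abs_sub_abs_le_abs_sub a (a + b)
      simpa using this
    have haab : |a + b| ≤ |a| + |b| := abs_add_le a b
    have haa : |a| ≤ |a| + |b| := le_add_of_nonneg_right (abs_nonneg b)
    have hs_nonneg : (0:ℝ) ≤ |a| + |b| := by positivity
    have hs_pow_nonneg : (0:ℝ) ≤ p * (|a| + |b|) ^ (p - 1) :=
      mul_nonneg hp0.le (Real.rpow_nonneg hs_nonneg _)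
    have habs : |(|a + b| ^ p - |a| ^ p)| ≤ p * (|a| + |b|) ^ (p - 1) * |b| := by
      rcases le_total |a| |a + b| with hc | hc
      · rw [abs_of_nonneg (sub_nonneg.mpr (Real.rpow_le_rpow (abs_nonneg a) hc hp.le))]
        calc |a + b| ^ p - |a| ^ p ≤ p * |a + b| ^ (p - 1) * (|a + b| - |a|) :=
              bl_mvt hp1.le (abs_nonneg a) hc
          _ ≤ p * (|a| + |b|) ^ (p - 1) * |b| := by
              apply mul_le_mul
              · exact mul_le_mul_of_nonneg_left
                  (Real.rpow_le_rpow (abs_nonneg _) haab (by linarith)) hp0.le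
              · exact hsub1
              · exact sub_nonneg.mpr hc
              · exact hs_pow_nonneg
      · rw [abs_of_nonpos (sub_nonpos.mpr (Real.rpow_le_rpow (abs_nonneg _) hc hp.le)), neg_sub]
        calc |a| ^ p - |a + b| ^ p ≤ p * |a| ^ (p - 1) * (|a| - |a + b|) :=
              bl_mvt hp1.le (abs_nonneg _) hc
          _ ≤ p * (|a| + |b|) ^ (p - 1) * |b| := by
              apply mul_le_mul
              · exact mul_le_mul_of_nonneg_left
                  (Real.rpow_le_rpow (abs_nonneg _) haa (by linarith)) hp0.le
              · exact hsub2
              · exact sub_nonneg.mpr hc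
              · exact hs_pow_nonneg
    have h2 : (|a| + |b|) ^ (p - 1) ≤ 2 ^ (p - 1) * (|a| ^ (p - 1) + |b| ^ (p - 1)) := by
      rcases le_total |a| |b| with hc | hc
      · calc (|a| + |b|) ^ (p - 1) ≤ (2 * |b|) ^ (p - 1) :=
              Real.rpow_le_rpow hs_nonneg (by linarith) (by linarith)
          _ = 2 ^ (p - 1) * |b| ^ (p - 1) := Real.mul_rpow (by norm_num) (abs_nonneg b)
          _ ≤ 2 ^ (p - 1) * (|a| ^ (p - 1) + |b| ^ (p - 1)) := by
              apply mul_le_mul_of_nonneg_left _ h2pos.le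
              nlinarith [Real.rpow_nonneg (abs_nonneg a) (p - 1)]
      · calc (|a| + |b|) ^ (p - 1) ≤ (2 * |a|) ^ (p - 1) :=
              Real.rpow_le_rpow hs_nonneg (by linarith) (by linarith)
          _ = 2 ^ (p - 1) * |a| ^ (p - 1) := Real.mul_rpow (by norm_num) (abs_nonneg a)
          _ ≤ 2 ^ (p - 1) * (|a| ^ (p - 1) + |b| ^ (p - 1)) := by
              apply mul_le_mul_of_nonneg_left _ h2pos.le
              nlinarith [Real.rpow_nonneg (abs_nonneg b) (p - 1)]
    have h3 : |a| ^ (p - 1) * |b| ≤ θ * t * |a| ^ p + 1 / p * t ^ (1 - p) * |b| ^ p := by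
      have := bl_young hp1 ht (abs_nonneg a) (abs_nonneg b)
      rw [hθdef]
      linarith
    have hbp : |b| ^ (p - 1) * |b| = |b| ^ p := by
      rcases eq_or_ne b 0 with rfl | hb
      · simp [Real.zero_rpow (by linarith : p - 1 ≠ 0), Real.zero_rpow hp.ne']
      · rw [← Real.rpow_add_one (abs_ne_zero.mpr hb), sub_add_cancel]
    have heq : p * 2 ^ (p - 1) * (θ * t) = ε := by
      rw [htdef]
      field_simp
    have hfinal : p * 2 ^ (p - 1) * (θ * t * |a| ^ p + 1 / p * t ^ (1 - p) * |b| ^ p)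
        = ε * |a| ^ p + 2 ^ (p - 1) * t ^ (1 - p) * |b| ^ p := by
      rw [← heq]
      field_simp
    calc |(|a + b| ^ p - |a| ^ p)| ≤ p * (|a| + |b|) ^ (p - 1) * |b| := habs
      _ ≤ p * (2 ^ (p - 1) * (|a| ^ (p - 1) + |b| ^ (p - 1))) * |b| :=
          mul_le_mul_of_nonneg_right (mul_le_mul_of_nonneg_left h2 hp0.le) (abs_nonneg b)
      _ = p * 2 ^ (p - 1) * (|a| ^ (p - 1) * |b|) + p * 2 ^ (p - 1) * (|b| ^ (p - 1) * |b|) := by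
          ring
      _ ≤ p * 2 ^ (p - 1) * (θ * t * |a| ^ p + 1 / p * t ^ (1 - p) * |b| ^ p)
            + p * 2 ^ (p - 1) * |b| ^ p := by
          rw [hbp]
          have := mul_le_mul_of_nonneg_left h3 (by positivity : (0:ℝ) ≤ p * 2 ^ (p - 1))
          linarith
      _ = ε * |a| ^ p + (2 ^ (p - 1) * t ^ (1 - p) + p * 2 ^ (p - 1)) * |b| ^ p := by
          rw [hfinal]; ring

lemma bl_two {p : ℝ} (hp : 0 < p) (u v : ℝ) : |u - v| ^ p ≤ 2 ^ p * (|u| ^ p + |v| ^ p) := by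
  have h1 : |u - v| ≤ |u| + |v| := by
    have := abs_add_le u (-v); simpa [sub_eq_add_neg] using this
  have h2pos : (0:ℝ) < (2:ℝ) ^ p := Real.rpow_pos_of_pos two_pos _
  rcases le_total |u| |v| with hc | hc
  · calc |u - v| ^ p ≤ (2 * |v|) ^ p :=
        Real.rpow_le_rpow (abs_nonneg _) (by linarith) hp.le
      _ = 2 ^ p * |v| ^ p := Real.mul_rpow (by norm_num) (abs_nonneg v)
      _ ≤ 2 ^ p * (|u| ^ p + |v| ^ p) := by
        nlinarith [Real.rpow_nonneg (abs_nonneg u) p]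
  · calc |u - v| ^ p ≤ (2 * |u|) ^ p :=
        Real.rpow_le_rpow (abs_nonneg _) (by linarith) hp.le
      _ = 2 ^ p * |u| ^ p := Real.mul_rpow (by norm_num) (abs_nonneg u)
      _ ≤ 2 ^ p * (|u| ^ p + |v| ^ p) := by
        nlinarith [Real.rpow_nonneg (abs_nonneg v) p]

theorem brezis_lieb
    {X : Type*} [MeasurableSpace X] (μ : Measure X)
    (p : ℝ) (hp : 0 < p)
    (f : ℕ → X → ℝ) (g : X → ℝ)
    (hf_meas : ∀ j, AEStronglyMeasurable (f j) μ)
    (hbdd : ∃ C : ℝ≥0∞, C ≠ ⊤ ∧ ∀ j, eLpNorm (f j) (ENNReal.ofReal p) μ ≤ C)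
    (hmem : ∀ j, MemLp (f j) (ENNReal.ofReal p) μ)
    (hae : ∀ᵐ x ∂μ, Tendsto (fun j => f j x) atTop (nhds (g x))) :
    Tendsto (fun j => ∫ x, |(|f j x| ^ p - |f j x - g x| ^ p - |g x| ^ p)| ∂μ)
      atTop (nhds 0) := by
  obtain ⟨C, hC_ne, hC⟩ := hbdd
  have hpne : ENNReal.ofReal p ≠ 0 := by simp [ENNReal.ofReal_eq_zero, not_le, hp]
  have hpnt : ENNReal.ofReal p ≠ ⊤ := ENNReal.ofReal_ne_top
  have hptr : (ENNReal.ofReal p).toReal = p := ENNReal.toReal_ofReal hp.le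
  have hg_meas : AEStronglyMeasurable g μ := aestronglyMeasurable_of_tendsto_ae atTop hf_meas hae
  have hgC : eLpNorm g (ENNReal.ofReal p) μ ≤ C := by
    refine le_trans (Lp.eLpNorm_lim_le_liminf_eLpNorm hf_meas g hae) ?_
    refine le_trans (Filter.liminf_le_liminf (Eventually.of_forall hC)) ?_
    simp [Filter.liminf_const]
  have hg_mem : MemLp g (ENNReal.ofReal p) μ :=
    ⟨hg_meas, lt_of_le_of_lt hgC hC_ne.lt_top⟩
  -- integrability
  have int_f : ∀ j, Integrable (fun x => |f j x| ^ p) μ := fun j => by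
    have := (hmem j).integrable_norm_rpow hpne hpnt
    simpa [hptr, Real.norm_eq_abs] using this
  have int_fg : ∀ j, Integrable (fun x => |f j x - g x| ^ p) μ := fun j => by
    have := ((hmem j).sub hg_mem).integrable_norm_rpow hpne hpnt
    simpa [hptr, Real.norm_eq_abs] using this
  have int_g : Integrable (fun x => |g x| ^ p) μ := by
    have := hg_mem.integrable_norm_rpow hpne hpnt
    simpa [hptr, Real.norm_eq_abs] using this
  have int_inner : ∀ j,
      Integrable (fun x => |(|f j x| ^ p - |f j x - g x| ^ p - |g x| ^ p)|) μ :=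
    fun j => (((int_f j).sub (int_fg j)).sub int_g).abs
  -- uniform bound on ∫ |f j - g|^p
  have hIf : ∀ j, ∫ x, |f j x| ^ p ∂μ ≤ C.toReal ^ p := by
    intro j
    have h := (hmem j).eLpNorm_eq_integral_rpow_norm hpne hpnt
    have hle := hC j
    rw [h] at hle
    have hI0 : 0 ≤ ∫ x, ‖f j x‖ ^ (ENNReal.ofReal p).toReal ∂μ :=
      integral_nonneg fun x => Real.rpow_nonneg (norm_nonneg _) _
    have h2 : (∫ x, ‖f j x‖ ^ (ENNReal.ofReal p).toReal ∂μ) ^ (ENNReal.ofReal p).toReal⁻¹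
        ≤ C.toReal := by
      have := ENNReal.toReal_mono hC_ne hle
      rwa [ENNReal.toReal_ofReal (Real.rpow_nonneg hI0 _)] at this
    have h3 := Real.rpow_le_rpow (Real.rpow_nonneg hI0 _) h2 hp.le
    rw [hptr] at hI0 h3
    rw [Real.rpow_inv_rpow hI0 hp.ne'] at h3
    simpa only [Real.norm_eq_abs] using h3
  set B := C.toReal ^ p with hBdef
  have hB0 : 0 ≤ B := Real.rpow_nonneg ENNReal.toReal_nonneg p
  set G := ∫ x, |g x| ^ p ∂μ with hGdef
  have hG0 : 0 ≤ G := integral_nonneg fun x => Real.rpow_nonneg (abs_nonneg _) _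
  have h2p : (0:ℝ) < (2:ℝ) ^ p := Real.rpow_pos_of_pos two_pos _
  set M := 2 ^ p * (B + G) with hMdef
  have hM0 : 0 ≤ M := by positivity
  have hM : ∀ j, ∫ x, |f j x - g x| ^ p ∂μ ≤ M := by
    intro j
    calc ∫ x, |f j x - g x| ^ p ∂μ
        ≤ ∫ x, 2 ^ p * (|f j x| ^ p + |g x| ^ p) ∂μ :=
          integral_mono (int_fg j) (((int_f j).add int_g).const_mul _)
            (fun x => bl_two hp (f j x) (g x))
      _ = 2 ^ p * ((∫ x, |f j x| ^ p ∂μ) + G) := by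
          rw [integral_const_mul, integral_add (int_f j) int_g]
      _ ≤ M := by
          rw [hMdef]
          have := hIf j
          nlinarith
  rw [NormedAddCommGroup.tendsto_nhds_zero]
  intro δ hδ
  set ε := δ / (2 * (M + 1)) with hεdef
  have hε : 0 < ε := by positivity
  obtain ⟨K, hK0, hKey⟩ := bl_key hp hε
  set W : ℕ → X → ℝ := fun j x =>
    max (|(|f j x| ^ p - |f j x - g x| ^ p - |g x| ^ p)| - ε * |f j x - g x| ^ p) 0 with hWdef
  have hW_nonneg : ∀ j x, 0 ≤ W j x := fun j x => le_max_right _ _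
  have hW_int : ∀ j, Integrable (W j) μ := fun j =>
    ((int_inner j).sub ((int_fg j).const_mul ε)).pos_part
  have hW_le : ∀ j x, W j x ≤ (K + 1) * |g x| ^ p := by
    intro j x
    have hKg : 0 ≤ (K + 1) * |g x| ^ p :=
      mul_nonneg (by linarith) (Real.rpow_nonneg (abs_nonneg _) _)
    refine max_le ?_ hKg
    have hk := hKey (f j x - g x) (g x)
    rw [sub_add_cancel] at hk
    have htri : |(|f j x| ^ p - |f j x - g x| ^ p - |g x| ^ p)|
        ≤ |(|f j x| ^ p - |f j x - g x| ^ p)| + |g x| ^ p := by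
      have h := abs_add_le (|f j x| ^ p - |f j x - g x| ^ p) (-(|g x| ^ p))
      rw [abs_neg, abs_of_nonneg (Real.rpow_nonneg (abs_nonneg _) _)] at h
      simpa [sub_eq_add_neg] using h
    linarith
  have hW_tendsto : ∀ᵐ x ∂μ, Tendsto (fun j => W j x) atTop (nhds 0) := by
    filter_upwards [hae] with x hx
    have hc1 : ContinuousAt (fun t : ℝ => |t| ^ p) (g x) :=
      (Real.continuousAt_rpow_const _ p (Or.inr hp.le)).comp continuous_abs.continuousAt
    have hc0 : ContinuousAt (fun t : ℝ => |t| ^ p) 0 :=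
      (Real.continuousAt_rpow_const _ p (Or.inr hp.le)).comp continuous_abs.continuousAt
    have h1 : Tendsto (fun j => |f j x| ^ p) atTop (nhds (|g x| ^ p)) := hc1.tendsto.comp hx
    have h2 : Tendsto (fun j => |f j x - g x| ^ p) atTop (nhds 0) := by
      have hx0 : Tendsto (fun j => f j x - g x) atTop (nhds 0) := by
        simpa using hx.sub_const (g x)
      have h := hc0.tendsto.comp hx0
      simpa [Function.comp_def, abs_zero, Real.zero_rpow hp.ne'] using h
    have h3 : Tendsto (fun j => |(|f j x| ^ p - |f j x - g x| ^ p - |g x| ^ p)|)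
        atTop (nhds 0) := by
      have h := ((h1.sub h2).sub (tendsto_const_nhds (x := |g x| ^ p))).abs
      simpa using h
    have h4 := (h3.sub (h2.const_mul ε)).max (tendsto_const_nhds (x := (0:ℝ)))
    rw [hWdef]
    simpa using h4
  have hW_int_tendsto : Tendsto (fun j => ∫ x, W j x ∂μ) atTop (nhds 0) := by
    have h := tendsto_integral_of_dominated_convergence (μ := μ)
      (F := W) (f := fun _ => (0:ℝ)) (fun x => (K + 1) * |g x| ^ p)
      (fun j => (hW_int j).aestronglyMeasurable)
      (int_g.const_mul (K + 1))
      (fun j => Eventually.of_forall fun x => by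
        rw [Real.norm_eq_abs, abs_of_nonneg (hW_nonneg j x)]
        exact hW_le j x)
      hW_tendsto
    simpa using h
  have hεM : ε * M ≤ δ / 2 := by
    rw [hεdef, div_mul_eq_mul_div, div_le_div_iff₀ (by positivity) (by norm_num)]
    nlinarith
  have ha_nonneg : ∀ j, 0 ≤ ∫ x, |(|f j x| ^ p - |f j x - g x| ^ p - |g x| ^ p)| ∂μ :=
    fun j => integral_nonneg fun x => abs_nonneg _
  have hconc : ∀ j, ∫ x, |(|f j x| ^ p - |f j x - g x| ^ p - |g x| ^ p)| ∂μ
      ≤ (∫ x, W j x ∂μ) + ε * M := by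
    intro j
    have hle : ∀ x, |(|f j x| ^ p - |f j x - g x| ^ p - |g x| ^ p)|
        ≤ W j x + ε * |f j x - g x| ^ p := fun x => by
      have h : |(|f j x| ^ p - |f j x - g x| ^ p - |g x| ^ p)| - ε * |f j x - g x| ^ p
          ≤ W j x := le_max_left _ _
      linarith
    calc ∫ x, |(|f j x| ^ p - |f j x - g x| ^ p - |g x| ^ p)| ∂μ
        ≤ ∫ x, (W j x + ε * |f j x - g x| ^ p) ∂μ :=
          integral_mono (int_inner j) ((hW_int j).add ((int_fg j).const_mul ε)) hle
      _ = (∫ x, W j x ∂μ) + ε * ∫ x, |f j x - g x| ^ p ∂μ := by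
          rw [integral_add (hW_int j) ((int_fg j).const_mul ε), integral_const_mul]
      _ ≤ (∫ x, W j x ∂μ) + ε * M := by
          have := hM j
          nlinarith
  filter_upwards [hW_int_tendsto.eventually_lt_const (show (0:ℝ) < δ / 2 by positivity)]
    with j hj
  rw [Real.norm_eq_abs, abs_of_nonneg (ha_nonneg j)]
  have := hconc j
  linarith
end

section
/- Let (X, μ) be a measure space, u : X → ℝ measurable, τ > 0, b ≥ 1/16, and let u_τ = Φ ∘ u with Φ as the truncation defined by Φ(s) = (b−1/16)τ for s > bτ, s − τ/16 for τ/16 ≤ s ≤ bτ, 0 for |s| < τ/16, s + τ/16 for −bτ ≤ s ≤ −τ/16, and −(b−1/16)τ for s < −bτ. Then μ({x : |u(x) − u_τ(x)| > τ/8}) ≤ (16/τ) ∫_X |u| 𝟙_{|u| > bτ} dμ. -/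
open MeasureTheory

/-- The truncation function used in the proof of the refined Sobolev inequality. -/
noncomputable def truncΦ (τ b : ℝ) (s : ℝ) : ℝ :=
  if b * τ < s then (b - 1/16) * τ
  else if τ/16 ≤ s then s - τ/16
  else if -τ/16 < s then 0
  else if -(b * τ) ≤ s then s + τ/16
  else -((b - 1/16) * τ)

theorem truncation_error_chebyshev
    {X : Type*} [MeasurableSpace X] (μ : Measure X)
    (u : X → ℝ) (hu : Measurable u) (τ b : ℝ) (hτ : 0 < τ) (hb : 1/16 ≤ b) :
    μ {x | τ/8 < |u x - truncΦ τ b (u x)|}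
      ≤ ENNReal.ofReal (16/τ) *
        ∫⁻ x, ENNReal.ofReal
          (|u x| * Set.indicator {x : X | b * τ < |u x|} (fun _ => (1 : ℝ)) x) ∂μ := by
  set S : Set X := {x : X | b * τ < |u x|} with hS
  have hSm : MeasurableSet S := measurableSet_lt measurable_const hu.abs
  have hsub : {x | τ/8 < |u x - truncΦ τ b (u x)|} ⊆ S := by
    intro x hx
    simp only [Set.mem_setOf_eq] at hx
    by_contra hle
    simp only [hS, Set.mem_setOf_eq, not_lt] at hle
    obtain ⟨h1, h2⟩ := abs_le.mp hle
    unfold truncΦ at hx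
    rw [if_neg (not_lt.mpr h2)] at hx
    by_cases hc1 : τ/16 ≤ u x
    · rw [if_pos hc1] at hx
      have he : |u x - (u x - τ/16)| = τ/16 := by
        rw [show u x - (u x - τ/16) = τ/16 by ring, abs_of_nonneg (by linarith)]
      rw [he] at hx; linarith
    · rw [if_neg hc1] at hx
      by_cases hc2 : -τ/16 < u x
      · rw [if_pos hc2] at hx
        rw [sub_zero] at hx
        rcases abs_cases (u x) with ⟨h, _⟩ | ⟨h, _⟩ <;>
          rw [h] at hx <;> push_neg at hc1 <;> linarith
      · rw [if_neg hc2, if_pos h1] at hx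
        have he : |u x - (u x + τ/16)| = τ/16 := by
          rw [show u x - (u x + τ/16) = -(τ/16) by ring, abs_neg,
            abs_of_nonneg (by linarith)]
        rw [he] at hx; linarith
  calc μ {x | τ/8 < |u x - truncΦ τ b (u x)|} ≤ μ S := measure_mono hsub
    _ = ∫⁻ x, S.indicator (fun _ => (1 : ENNReal)) x ∂μ := by
        rw [lintegral_indicator hSm]; simp
    _ ≤ ∫⁻ x, ENNReal.ofReal (16/τ) *
          ENNReal.ofReal (|u x| * S.indicator (fun _ => (1 : ℝ)) x) ∂μ := by
        refine lintegral_mono fun x => ?_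
        by_cases hx : x ∈ S
        · have hxS : b * τ < |u x| := hx
          rw [Set.indicator_of_mem hx, Set.indicator_of_mem hx, mul_one,
            ← ENNReal.ofReal_mul (by positivity)]
          refine ENNReal.one_le_ofReal.mpr ?_
          have h16 : (0:ℝ) < 16/τ := by positivity
          have : 16/τ * (b * τ) ≤ 16/τ * |u x| := by nlinarith
          have hbb : 16/τ * (b * τ) = 16 * b := by field_simp
          linarith [hbb ▸ this]
        · rw [Set.indicator_of_notMem hx]
          exact zero_le
    _ = ENNReal.ofReal (16/τ) * ∫⁻ x, ENNReal.ofReal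
          (|u x| * S.indicator (fun _ => (1 : ℝ)) x) ∂μ :=
        lintegral_const_mul' _ _ ENNReal.ofReal_ne_top
end

section
/- Let d ≥ 1, D > 0, 1 < r < ∞ with conjugate exponent r', and 0 < β < D/r'. Let w be a nonnegative homogeneous weight of degree D − d on ℝ^d with finite, positive sphere integral a = ∫_{S^{d-1}} w dσ, and fix t > 0. Suppose K : ℝ^d → ℝ is measurable with 0 ≤ K(y) ≤ C t^{-D/2} for all y and ∫_{ℝ^d} K(y)^{r'} w(y) dy ≤ B t^{-D(r'−1)/2}. Then ∫_{ℝ^d} K(y)^{r'} |y|^{-β r'} w(y) dy ≤ C^{r'} t^{-Dr'/2} · (a/(D − βr')) t^{(D−βr')/2} + B t^{-βr'/2} t^{-D(r'−1)/2}; in particular the integral is finite. -/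
open MeasureTheory Set Metric
open scoped ENNReal

lemma polar_lintegral_aux {E : Type*} [NormedAddCommGroup E] [NormedSpace ℝ E]
    [MeasurableSpace E] [BorelSpace E] [FiniteDimensional ℝ E] [Nontrivial E]
    (μ : Measure E) [μ.IsAddHaarMeasure] (D : ℝ)
    (w : E → ℝ) (hw_meas : Measurable w)
    (hw_hom : ∀ (c : ℝ) (x : E),
      w (c • x) = |c| ^ (D - Module.finrank ℝ E) * w x)
    (g : ℝ → ℝ≥0∞) (hg : Measurable g) :
    ∫⁻ y, g ‖y‖ * ENNReal.ofReal (w y) ∂μ =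
      (∫⁻ s : sphere (0 : E) 1, ENNReal.ofReal (w s) ∂μ.toSphere) *
      ∫⁻ x in Ioi (0:ℝ), ENNReal.ofReal (x ^ (D - 1)) * g x := by
  have hd : 1 ≤ Module.finrank ℝ E := Module.finrank_pos
  set f : E → ℝ≥0∞ := fun y => g ‖y‖ * ENNReal.ofReal (w y) with hf_def
  have hf : Measurable f := (hg.comp measurable_norm).mul (ENNReal.measurable_ofReal.comp hw_meas)
  set F : sphere (0 : E) 1 × Ioi (0:ℝ) → ℝ≥0∞ := fun p => f ((p.2 : ℝ) • (p.1 : E)) with hF_def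
  have hF : Measurable F := by
    apply hf.comp
    exact ((continuous_subtype_val.comp continuous_snd).smul
      (continuous_subtype_val.comp continuous_fst)).measurable
  calc ∫⁻ y, f y ∂μ
      = ∫⁻ y in ({(0:E)}ᶜ : Set E), f y ∂μ := by
        rw [restrict_compl_singleton]
    _ = ∫⁻ x : ({(0:E)}ᶜ : Set E), f x ∂(μ.comap (↑)) :=
        (lintegral_subtype_comap (measurableSet_singleton _).compl f).symm
    _ = ∫⁻ p : sphere (0 : E) 1 × Ioi (0:ℝ), F p
          ∂((μ.toSphere).prod (Measure.volumeIoiPow (Module.finrank ℝ E - 1))) := by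
        rw [← (Measure.measurePreserving_homeomorphUnitSphereProd μ).lintegral_comp hF]
        refine lintegral_congr fun x => ?_
        simp only [hF_def]
        congr 1
        simp only [homeomorphUnitSphereProd_apply_fst_coe,
          homeomorphUnitSphereProd_apply_snd_coe]
        rw [smul_inv_smul₀ (norm_ne_zero_iff.2 x.2)]
    _ = ∫⁻ s : sphere (0 : E) 1, ∫⁻ x : Ioi (0:ℝ), F (s, x)
          ∂(Measure.volumeIoiPow (Module.finrank ℝ E - 1)) ∂μ.toSphere :=
        lintegral_prod F hF.aemeasurable
    _ = ∫⁻ s : sphere (0 : E) 1,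
          (∫⁻ x in Ioi (0:ℝ), ENNReal.ofReal (x ^ (D - 1)) * g x) * ENNReal.ofReal (w s)
          ∂μ.toSphere := by
        refine lintegral_congr fun s => ?_
        have hm : Measurable (fun x : Ioi (0:ℝ) => f ((x : ℝ) • (s : E))) :=
          hf.comp (continuous_subtype_val.smul continuous_const).measurable
        simp only [hF_def]
        rw [Measure.volumeIoiPow, lintegral_withDensity_eq_lintegral_mul _
          (by fun_prop) hm]
        have := lintegral_subtype_comap (μ := (volume : Measure ℝ))
          (measurableSet_Ioi (a := (0:ℝ)))
          (fun x => ENNReal.ofReal (x ^ (Module.finrank ℝ E - 1)) * f (x • (s : E)))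
        simp only [Pi.mul_apply] at this ⊢
        rw [this]
        rw [← lintegral_mul_const' (ENNReal.ofReal (w s)) _ ENNReal.ofReal_ne_top]
        refine setLIntegral_congr_fun measurableSet_Ioi (fun x hx => ?_)
        have hx0 : (0:ℝ) < x := hx
        have hns : ‖(s : E)‖ = 1 := by
          simpa using s.2
        have hnorm : ‖x • (s : E)‖ = x := by
          rw [norm_smul, hns, mul_one, Real.norm_eq_abs, abs_of_pos hx0]
        have hws : w (x • (s : E)) = x ^ (D - Module.finrank ℝ E) * w s := by
          rw [hw_hom, abs_of_pos hx0]
        have hpow : (x : ℝ) ^ (Module.finrank ℝ E - 1) = x ^ ((Module.finrank ℝ E : ℝ) - 1) := by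
          rw [← Real.rpow_natCast x (Module.finrank ℝ E - 1)]
          congr 1
          push_cast [Nat.cast_sub hd]
          ring
        simp only [hf_def, hnorm, hws, hpow]
        rw [ENNReal.ofReal_mul (by positivity)]
        rw [show ∀ A B C E' : ℝ≥0∞, A * (B * (C * E')) = ((A * C) * B) * E' from
          fun A B C E' => by ring]
        congr 2
        rw [← ENNReal.ofReal_mul (by positivity), ← Real.rpow_add hx0]
        congr 1
        ring
    _ = (∫⁻ s : sphere (0 : E) 1, ENNReal.ofReal (w s) ∂μ.toSphere) *
          ∫⁻ x in Ioi (0:ℝ), ENNReal.ofReal (x ^ (D - 1)) * g x := by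
        have hms : AEMeasurable (fun s : sphere (0:E) 1 => ENNReal.ofReal (w s)) μ.toSphere :=
          ((ENNReal.measurable_ofReal.comp hw_meas).comp measurable_subtype_coe).aemeasurable
        rw [lintegral_const_mul'' _ hms, mul_comm]

theorem heat_kernel_weighted_integral_bound
    (d : ℕ) (hd : 1 ≤ d) (D : ℝ) (hD : 0 < D)
    (r r' : ℝ) (hr : 1 < r) (hconj : 1/r + 1/r' = 1)
    (β : ℝ) (hβ0 : 0 < β) (hβ : β < D / r')
    (w : EuclideanSpace ℝ (Fin d) → ℝ)
    (hw_nonneg : ∀ x, 0 ≤ w x) (hw_meas : Measurable w)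
    (hw_hom : ∀ (c : ℝ) (x : EuclideanSpace ℝ (Fin d)),
      w (c • x) = |c| ^ (D - d) * w x)
    (a : ℝ) (ha_pos : 0 < a)
    (ha : a = ∫ x' : Metric.sphere (0 : EuclideanSpace ℝ (Fin d)) 1,
      w x' ∂((volume : Measure (EuclideanSpace ℝ (Fin d))).toSphere))
    (t : ℝ) (ht : 0 < t)
    (K : EuclideanSpace ℝ (Fin d) → ℝ) (hK_meas : Measurable K)
    (C B : ℝ) (hC : 0 < C) (hB : 0 < B)
    (hK_bd : ∀ y, 0 ≤ K y ∧ K y ≤ C * t ^ (-D/2))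
    (hK_int : ∫⁻ y, ENNReal.ofReal (K y ^ r' * w y) ∂volume
      ≤ ENNReal.ofReal (B * t ^ (-D * (r' - 1) / 2))) :
    ∫⁻ y, ENNReal.ofReal (K y ^ r' * ‖y‖ ^ (-(β * r')) * w y) ∂volume
      ≤ ENNReal.ofReal
          (C ^ r' * t ^ (-D * r' / 2) * (a / (D - β * r')) * t ^ ((D - β * r') / 2)
            + B * t ^ (-(β * r') / 2) * t ^ (-D * (r' - 1) / 2)) := by
  have hr0 : (0:ℝ) < r := lt_trans zero_lt_one hr
  have h1r : 1/r < 1 := (div_lt_one hr0).2 hr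
  have hr'inv : 0 < 1/r' := by linarith
  have hr'pos : 0 < r' := one_div_pos.mp hr'inv
  have hβD : β * r' < D := (lt_div_iff₀ hr'pos).1 hβ
  have hsub : 0 < D - β * r' := by linarith
  have hsq : 0 < Real.sqrt t := Real.sqrt_pos.2 ht
  haveI : Nonempty (Fin d) := ⟨⟨0, hd⟩⟩
  have hdim : Module.finrank ℝ (EuclideanSpace ℝ (Fin d)) = d := finrank_euclideanSpace_fin
  haveI : Nontrivial (EuclideanSpace ℝ (Fin d)) :=
    Module.nontrivial_of_finrank_pos (R := ℝ) (by omega : 0 < Module.finrank ℝ (EuclideanSpace ℝ (Fin d)))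
  have hw_hom' : ∀ (c : ℝ) (x : EuclideanSpace ℝ (Fin d)),
      w (c • x) = |c| ^ (D - Module.finrank ℝ (EuclideanSpace ℝ (Fin d))) * w x := by
    simpa [hdim] using hw_hom
  -- the sphere integral
  have hsphere : ∫⁻ s : sphere (0 : EuclideanSpace ℝ (Fin d)) 1, ENNReal.ofReal (w s)
      ∂((volume : Measure (EuclideanSpace ℝ (Fin d))).toSphere) = ENNReal.ofReal a := by
    by_cases hint : Integrable (fun s : sphere (0 : EuclideanSpace ℝ (Fin d)) 1 => w s)
      ((volume : Measure (EuclideanSpace ℝ (Fin d))).toSphere)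
    · rw [ha]
      exact (ofReal_integral_eq_lintegral_ofReal hint (ae_of_all _ fun s => hw_nonneg s)).symm
    · exact absurd (ha.trans (integral_undef hint)) ha_pos.ne'
  set S : Set (EuclideanSpace ℝ (Fin d)) := {y | ‖y‖ ≤ Real.sqrt t} with hS_def
  have hS : MeasurableSet S := measurableSet_le measurable_norm measurable_const
  set g₁ : ℝ → ℝ≥0∞ := fun x => if x ≤ Real.sqrt t then ENNReal.ofReal (x ^ (-(β * r'))) else 0
    with hg₁_def
  have hg₁ : Measurable g₁ := by
    apply Measurable.ite (measurableSet_le measurable_id measurable_const)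
    · exact ENNReal.measurable_ofReal.comp (measurable_id.pow measurable_const)
    · exact measurable_const
  have htsq : Real.sqrt t ^ (D - β * r') = t ^ ((D - β * r') / 2) := by
    rw [Real.sqrt_eq_rpow, ← Real.rpow_mul ht.le]
    congr 1; ring
  have htsq' : Real.sqrt t ^ (-(β * r')) = t ^ (-(β * r') / 2) := by
    rw [Real.sqrt_eq_rpow, ← Real.rpow_mul ht.le]
    congr 1; ring
  -- inner part
  have hinner : ∫⁻ y in S, ENNReal.ofReal (K y ^ r' * ‖y‖ ^ (-(β * r')) * w y) ∂volume
      ≤ ENNReal.ofReal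
        (C ^ r' * t ^ (-D * r' / 2) * (a / (D - β * r')) * t ^ ((D - β * r') / 2)) := by
    have hKb : ∀ y, K y ^ r' ≤ C ^ r' * t ^ (-D * r' / 2) := by
      intro y
      calc K y ^ r' ≤ (C * t ^ (-D/2)) ^ r' :=
            Real.rpow_le_rpow (hK_bd y).1 (hK_bd y).2 hr'pos.le
        _ = C ^ r' * t ^ (-D * r' / 2) := by
            rw [Real.mul_rpow hC.le (Real.rpow_nonneg ht.le _), ← Real.rpow_mul ht.le]
            congr 1; ring
    calc ∫⁻ y in S, ENNReal.ofReal (K y ^ r' * ‖y‖ ^ (-(β * r')) * w y) ∂volume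
        ≤ ∫⁻ y in S, ENNReal.ofReal
            ((C ^ r' * t ^ (-D * r' / 2)) * (‖y‖ ^ (-(β * r')) * w y)) ∂volume := by
          refine lintegral_mono fun y => ENNReal.ofReal_le_ofReal ?_
          rw [mul_assoc]
          exact mul_le_mul_of_nonneg_right (hKb y)
            (mul_nonneg (Real.rpow_nonneg (norm_nonneg y) _) (hw_nonneg y))
      _ = ENNReal.ofReal (C ^ r' * t ^ (-D * r' / 2)) *
            ∫⁻ y in S, ENNReal.ofReal (‖y‖ ^ (-(β * r')) * w y) ∂volume := by
          simp_rw [ENNReal.ofReal_mul (show (0:ℝ) ≤ C ^ r' * t ^ (-D * r' / 2) by positivity)]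
          exact lintegral_const_mul' _ _ ENNReal.ofReal_ne_top
      _ = ENNReal.ofReal (C ^ r' * t ^ (-D * r' / 2)) *
            (ENNReal.ofReal a *
              ∫⁻ x in Ioi (0:ℝ), ENNReal.ofReal (x ^ (D - 1)) * g₁ x) := by
          congr 1
          have hind : ∫⁻ y in S, ENNReal.ofReal (‖y‖ ^ (-(β * r')) * w y) ∂volume
              = ∫⁻ y, g₁ ‖y‖ * ENNReal.ofReal (w y) ∂volume := by
            rw [← lintegral_indicator hS]
            refine lintegral_congr fun y => ?_
            simp only [hg₁_def, Set.indicator_apply]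
            by_cases hy : ‖y‖ ≤ Real.sqrt t
            · rw [if_pos hy, if_pos (by exact hy : y ∈ S),
                ENNReal.ofReal_mul (Real.rpow_nonneg (norm_nonneg y) _)]
            · rw [if_neg hy, if_neg (by exact hy : y ∉ S), zero_mul]
          rw [hind, polar_lintegral_aux volume D w hw_meas hw_hom' g₁ hg₁, hsphere]
      _ = ENNReal.ofReal (C ^ r' * t ^ (-D * r' / 2)) *
            (ENNReal.ofReal a *
              ENNReal.ofReal (Real.sqrt t ^ (D - β * r') / (D - β * r'))) := by
          congr 2
          have h1 : ∀ x : ℝ, ENNReal.ofReal (x ^ (D - 1)) * g₁ x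
              = (Iic (Real.sqrt t)).indicator
                  (fun x => ENNReal.ofReal (x ^ (D - 1)) * ENNReal.ofReal (x ^ (-(β * r')))) x := by
            intro x
            simp only [hg₁_def, Set.indicator_apply, mem_Iic]
            by_cases hx : x ≤ Real.sqrt t
            · simp [hx]
            · simp [hx]
          simp_rw [h1]
          rw [lintegral_indicator measurableSet_Iic, Measure.restrict_restrict measurableSet_Iic,
            Set.inter_comm, Set.Ioi_inter_Iic]
          have h2 : ∫⁻ x in Ioc (0:ℝ) (Real.sqrt t),
              ENNReal.ofReal (x ^ (D - 1)) * ENNReal.ofReal (x ^ (-(β * r')))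
              = ∫⁻ x in Ioc (0:ℝ) (Real.sqrt t), ENNReal.ofReal (x ^ (D - 1 - β * r')) := by
            refine setLIntegral_congr_fun measurableSet_Ioc (fun x hx => ?_)
            rw [← ENNReal.ofReal_mul (Real.rpow_nonneg hx.1.le _), ← Real.rpow_add hx.1,
              show D - 1 + -(β * r') = D - 1 - β * r' from by ring]
          rw [h2]
          have hInt : IntegrableOn (fun x : ℝ => x ^ (D - 1 - β * r'))
              (Ioc 0 (Real.sqrt t)) volume :=
            (intervalIntegral.intervalIntegrable_rpow' (show (-1:ℝ) < D - 1 - β * r' by linarith)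
              (a := 0) (b := Real.sqrt t)).1
          rw [← ofReal_integral_eq_lintegral_ofReal hInt ?_]
          · congr 1
            rw [← intervalIntegral.integral_of_le hsq.le,
              integral_rpow (Or.inl (by linarith : (-1:ℝ) < D - 1 - β * r'))]
            have he : D - 1 - β * r' + 1 = D - β * r' := by ring
            rw [he, Real.zero_rpow hsub.ne', sub_zero]
          · filter_upwards [ae_restrict_mem measurableSet_Ioc] with x hx using
              Real.rpow_nonneg hx.1.le _
      _ = ENNReal.ofReal
            (C ^ r' * t ^ (-D * r' / 2) * (a / (D - β * r')) * t ^ ((D - β * r') / 2)) := by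
          rw [← ENNReal.ofReal_mul ha_pos.le, ← ENNReal.ofReal_mul (by positivity)]
          congr 1
          rw [htsq]
          ring
  -- outer part
  have houter : ∫⁻ y in Sᶜ, ENNReal.ofReal (K y ^ r' * ‖y‖ ^ (-(β * r')) * w y) ∂volume
      ≤ ENNReal.ofReal (B * t ^ (-(β * r') / 2) * t ^ (-D * (r' - 1) / 2)) := by
    have hpt : ∀ y ∈ Sᶜ, K y ^ r' * ‖y‖ ^ (-(β * r')) * w y
        ≤ t ^ (-(β * r') / 2) * (K y ^ r' * w y) := by
      intro y hy
      have hy' : Real.sqrt t < ‖y‖ := not_le.1 hy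
      have hb : ‖y‖ ^ (-(β * r')) ≤ t ^ (-(β * r') / 2) := by
        calc ‖y‖ ^ (-(β * r')) ≤ Real.sqrt t ^ (-(β * r')) :=
              Real.rpow_le_rpow_of_nonpos hsq hy'.le (by nlinarith : -(β * r') ≤ 0)
          _ = t ^ (-(β * r') / 2) := htsq'
      have hK0 : (0:ℝ) ≤ K y ^ r' := Real.rpow_nonneg (hK_bd y).1 _
      calc K y ^ r' * ‖y‖ ^ (-(β * r')) * w y
          = ‖y‖ ^ (-(β * r')) * (K y ^ r' * w y) := by ring
        _ ≤ t ^ (-(β * r') / 2) * (K y ^ r' * w y) :=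
            mul_le_mul_of_nonneg_right hb (mul_nonneg hK0 (hw_nonneg y))
    calc ∫⁻ y in Sᶜ, ENNReal.ofReal (K y ^ r' * ‖y‖ ^ (-(β * r')) * w y) ∂volume
        ≤ ∫⁻ y in Sᶜ, ENNReal.ofReal (t ^ (-(β * r') / 2) * (K y ^ r' * w y)) ∂volume :=
          setLIntegral_mono' hS.compl fun y hy => ENNReal.ofReal_le_ofReal (hpt y hy)
      _ ≤ ∫⁻ y, ENNReal.ofReal (t ^ (-(β * r') / 2) * (K y ^ r' * w y)) ∂volume :=
          setLIntegral_le_lintegral _ _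
      _ = ENNReal.ofReal (t ^ (-(β * r') / 2)) *
            ∫⁻ y, ENNReal.ofReal (K y ^ r' * w y) ∂volume := by
          simp_rw [ENNReal.ofReal_mul (Real.rpow_nonneg ht.le _)]
          exact lintegral_const_mul' _ _ ENNReal.ofReal_ne_top
      _ ≤ ENNReal.ofReal (t ^ (-(β * r') / 2)) *
            ENNReal.ofReal (B * t ^ (-D * (r' - 1) / 2)) := mul_le_mul_right hK_int _
      _ = ENNReal.ofReal (B * t ^ (-(β * r') / 2) * t ^ (-D * (r' - 1) / 2)) := by
          rw [← ENNReal.ofReal_mul (Real.rpow_nonneg ht.le _)]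
          congr 1; ring
  have hT1 : (0:ℝ) ≤ C ^ r' * t ^ (-D * r' / 2) * (a / (D - β * r')) * t ^ ((D - β * r') / 2) :=
    mul_nonneg (mul_nonneg (mul_nonneg (Real.rpow_nonneg hC.le _) (Real.rpow_nonneg ht.le _))
      (div_nonneg ha_pos.le hsub.le)) (Real.rpow_nonneg ht.le _)
  calc ∫⁻ y, ENNReal.ofReal (K y ^ r' * ‖y‖ ^ (-(β * r')) * w y) ∂volume
      = (∫⁻ y in S, ENNReal.ofReal (K y ^ r' * ‖y‖ ^ (-(β * r')) * w y) ∂volume)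
        + ∫⁻ y in Sᶜ, ENNReal.ofReal (K y ^ r' * ‖y‖ ^ (-(β * r')) * w y) ∂volume :=
        (lintegral_add_compl _ hS).symm
    _ ≤ ENNReal.ofReal
          (C ^ r' * t ^ (-D * r' / 2) * (a / (D - β * r')) * t ^ ((D - β * r') / 2))
        + ENNReal.ofReal (B * t ^ (-(β * r') / 2) * t ^ (-D * (r' - 1) / 2)) :=
        add_le_add hinner houter
    _ = ENNReal.ofReal
          (C ^ r' * t ^ (-D * r' / 2) * (a / (D - β * r')) * t ^ ((D - β * r') / 2)
            + B * t ^ (-(β * r') / 2) * t ^ (-D * (r' - 1) / 2)) :=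
        (ENNReal.ofReal_add hT1 (by positivity)).symm
end
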